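/- For m, l nonnegative integers with m² + l² ≥ 1, the number λ_{l,m} = -(m²π²/d² + (l(l+n-2) - (n-1))/R²) is strictly negative for all such (l,m) except (l,m) = (1,0), provided R > d√(n-1)/π, d > 0, R > 0, and n ≥ 2. -/
import Mathlib


open Real

theorem eigenvalues_nonpositive (n : ℕ) (hn : 2 ≤ n) (d R : ℝ) (hd : 0 < d) (hR : 0 < R)
    (hcond : R > d * Real.sqrt (n - 1) / π) :
    (∀ l m : ℕ, 1 ≤ m ^ 2 + l ^ 2 → (l, m) ≠ (1, 0) →
      -((m : ℝ) ^ 2 * π ^ 2 / d ^ 2 + ((l : ℝ) * ((l : ℝ) + (n : ℝ) - 2) - ((n : ℝ) - 1)) / R ^ 2) < 0) ∧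
    -((0 : ℝ) ^ 2 * π ^ 2 / d ^ 2 + ((1 : ℝ) * ((1 : ℝ) + (n : ℝ) - 2) - ((n : ℝ) - 1)) / R ^ 2) = 0 := by
  have hπ : (0:ℝ) < π := Real.pi_pos
  have hn1 : (0:ℝ) ≤ (n:ℝ) - 1 := by
    have : (2:ℝ) ≤ n := by exact_mod_cast hn
    linarith
  have hkey : ((n:ℝ) - 1) / R ^ 2 < π ^ 2 / d ^ 2 := by
    have h1 : R * π > d * Real.sqrt ((n:ℝ) - 1) := by
      rw [gt_iff_lt, ← div_lt_iff₀ hπ]; exact hcond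
    have h2 : (R * π) ^ 2 > (d * Real.sqrt ((n:ℝ) - 1)) ^ 2 := by
      apply sq_lt_sq' _ h1
      have : 0 ≤ d * Real.sqrt ((n:ℝ) - 1) := by positivity
      linarith
    have h3 : (d * Real.sqrt ((n:ℝ) - 1)) ^ 2 = d ^ 2 * ((n:ℝ) - 1) := by
      rw [mul_pow, Real.sq_sqrt hn1]
    rw [div_lt_div_iff₀ (by positivity) (by positivity)]
    nlinarith [h2, h3]
  constructor
  · intro l m hm hne
    rw [neg_lt_zero]
    have hR2 : (0:ℝ) < R ^ 2 := by positivity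
    have hd2 : (0:ℝ) < d ^ 2 := by positivity
    rcases Nat.lt_or_ge l 2 with hl | hl
    · interval_cases l
      · -- l = 0, so m ≥ 1
        have hm1 : 1 ≤ m := by nlinarith [sq_nonneg m]
        have hmR : (1:ℝ) ≤ (m:ℝ) := by exact_mod_cast hm1
        have h4 : ((n:ℝ) - 1) / R ^ 2 < (m:ℝ) ^ 2 * π ^ 2 / d ^ 2 := by
          calc ((n:ℝ) - 1) / R ^ 2 < π ^ 2 / d ^ 2 := hkey
            _ ≤ (m:ℝ) ^ 2 * π ^ 2 / d ^ 2 := by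
              have hm2 : (1:ℝ) ≤ (m:ℝ)^2 := by nlinarith
              rw [div_le_div_iff₀ hd2 hd2]
              nlinarith [mul_le_mul_of_nonneg_right (mul_le_mul_of_nonneg_right hm2 (sq_nonneg π)) (sq_nonneg d)]
        push_cast
        have : ((0:ℝ) * (0 + (n:ℝ) - 2) - ((n:ℝ) - 1)) / R ^ 2 = -(((n:ℝ) - 1) / R ^ 2) := by
          ring
        rw [this]
        linarith
      · -- l = 1, so m ≥ 1
        have hm1 : m ≠ 0 := by
          intro h; exact hne (by simp [h])
        have hmR : (1:ℝ) ≤ (m:ℝ) := by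
          exact_mod_cast Nat.one_le_iff_ne_zero.mpr hm1
        have : ((1:ℝ) * (1 + (n:ℝ) - 2) - ((n:ℝ) - 1)) = 0 := by ring
        push_cast
        rw [show ((1:ℝ) * (1 + (n:ℝ) - 2) - ((n:ℝ) - 1)) / R ^ 2 = 0 by rw [this, zero_div]]
        have : (0:ℝ) < (m:ℝ) ^ 2 * π ^ 2 / d ^ 2 := by positivity
        linarith
    · -- l ≥ 2
      have hlR : (2:ℝ) ≤ (l:ℝ) := by exact_mod_cast hl
      have hnR : (2:ℝ) ≤ (n:ℝ) := by exact_mod_cast hn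
      have hpos : 0 < ((l:ℝ) * ((l:ℝ) + (n:ℝ) - 2) - ((n:ℝ) - 1)) / R ^ 2 := by
        apply div_pos _ hR2
        nlinarith
      have : (0:ℝ) ≤ (m:ℝ) ^ 2 * π ^ 2 / d ^ 2 := by positivity
      linarith
  · have : ((1:ℝ) * (1 + (n:ℝ) - 2) - ((n:ℝ) - 1)) = 0 := by ring
    rw [show ((1:ℝ) + (n:ℝ) - 2) = (1 + (n:ℝ) - 2) by ring, this]
    simp
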